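/- arXiv:2402.06345 — 2 statements merged into one kernel-verified Lean document; each statement's English description precedes it below -/
import Mathlib

section
/- Let X be a Banach space, Y a Hilbert space, and T, S : X → Y bounded linear operators such that S is an isomorphism onto its closed image. Let p : Y → Y be the orthogonal projection onto S(X) and S⁻¹ : S(X) → X the inverse of S. Then argmax_{‖S(x)‖≤1} ‖T(x)‖ = S⁻¹(S(X) ∩ suppv(T ∘ S⁻¹ ∘ p)), where suppv(R) = argmax_{‖y‖≤1} ‖R(y)‖. -/
open scoped RealInnerProductSpace

theorem stmt_11 {X Y : Type*}
    [NormedAddCommGroup X] [NormedSpace ℝ X] [CompleteSpace X]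
    [NormedAddCommGroup Y] [InnerProductSpace ℝ Y] [CompleteSpace Y]
    (T S : X →L[ℝ] Y) (Sinv : Y →L[ℝ] X) (hSinv : ∀ x : X, Sinv (S x) = x)
    (hclosed : IsClosed (Set.range S))
    (p : Y →L[ℝ] Y) (hp : p.comp p = p) (hprange : Set.range p = Set.range S)
    (hpsym : ∀ y z : Y, ⟪p y, z⟫ = ⟪y, p z⟫) :
    {x : X | ‖S x‖ ≤ 1 ∧ ∀ z : X, ‖S z‖ ≤ 1 → ‖T z‖ ≤ ‖T x‖} =
      Sinv '' (Set.range S ∩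
        {y : Y | ‖y‖ ≤ 1 ∧ ∀ z : Y, ‖z‖ ≤ 1 → ‖T (Sinv (p z))‖ ≤ ‖T (Sinv (p y))‖}) := by
  have hpp : ∀ z : Y, p (p z) = p z := fun z =>
    congrArg (fun f : Y →L[ℝ] Y => f z) hp
  have hfix : ∀ y ∈ Set.range S, p y = y := by
    intro y hy
    rw [← hprange] at hy
    obtain ⟨u, rfl⟩ := hy
    exact hpp u
  have hnorm : ∀ z : Y, ‖p z‖ ≤ ‖z‖ := by
    intro z
    by_cases h0 : ‖p z‖ = 0
    · rw [h0]; exact norm_nonneg z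
    · have h1 : ‖p z‖ * ‖p z‖ = ⟪p z, p z⟫ := (real_inner_self_eq_norm_mul_norm _).symm
      have h2 : ⟪p z, p z⟫ = ⟪z, p z⟫ := by rw [hpsym, hpp]
      have h3 : ⟪z, p z⟫ ≤ ‖z‖ * ‖p z‖ := real_inner_le_norm z (p z)
      have h4 : ‖p z‖ * ‖p z‖ ≤ ‖z‖ * ‖p z‖ := by rw [h1, h2]; exact h3
      have hp0 : 0 < ‖p z‖ := lt_of_le_of_ne (norm_nonneg _) (Ne.symm h0)
      exact le_of_mul_le_mul_right h4 hp0
  ext x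
  simp only [Set.mem_setOf_eq, Set.mem_image, Set.mem_inter_iff]
  constructor
  · rintro ⟨hx1, hx2⟩
    refine ⟨S x, ⟨⟨x, rfl⟩, hx1, ?_⟩, hSinv x⟩
    intro z hz
    have hpz : p z ∈ Set.range S := by rw [← hprange]; exact ⟨z, rfl⟩
    obtain ⟨w, hw⟩ := hpz
    rw [hfix (S x) ⟨x, rfl⟩, hSinv x, ← hw, hSinv w]
    apply hx2
    rw [hw]
    exact le_trans (hnorm z) hz
  · rintro ⟨y, ⟨⟨w, rfl⟩, hy1, hy2⟩, rfl⟩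
    rw [hSinv w]
    refine ⟨hy1, ?_⟩
    intro z hz
    have := hy2 (S z) hz
    rwa [hfix (S z) ⟨z, rfl⟩, hfix (S w) ⟨w, rfl⟩, hSinv, hSinv] at this
end

section
/- Let A, B be real m×n matrices with ker(B) = {0}, and let B⁺ denote the Moore–Penrose inverse of B. Then B(argmax_{‖Bx‖₂≤1} ‖Ax‖₂) = B(ℝⁿ) ∩ argmax_{‖y‖₂≤1} ‖AB⁺y‖₂. -/
open Matrix

/-- Euclidean norm of a vector in `Fin k → ℝ`. -/
noncomputable def enorm' {k : ℕ} (v : Fin k → ℝ) : ℝ := Real.sqrt (∑ i, v i ^ 2)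

lemma enorm_sq {k : ℕ} (v : Fin k → ℝ) : enorm' v = Real.sqrt (v ⬝ᵥ v) := by
  simp [enorm', dotProduct, sq]

lemma symm_dot {k : ℕ} (P : Matrix (Fin k) (Fin k) ℝ) (hP : Pᵀ = P)
    (u v : Fin k → ℝ) : (P.mulVec u) ⬝ᵥ v = u ⬝ᵥ (P.mulVec v) := by
  rw [Matrix.dotProduct_mulVec, ← Matrix.mulVec_transpose, hP, dotProduct_comm,
    Matrix.dotProduct_mulVec, ← Matrix.mulVec_transpose, hP, dotProduct_comm]

lemma proj_norm_le {k : ℕ} (P : Matrix (Fin k) (Fin k) ℝ) (hP : Pᵀ = P)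
    (hPP : P * P = P) (z : Fin k → ℝ) : enorm' (P.mulVec z) ≤ enorm' z := by
  set a := P.mulVec z with ha
  have hPa : P.mulVec a = a := by
    rw [ha, Matrix.mulVec_mulVec, hPP]
  have horth : a ⬝ᵥ (z - a) = 0 := by
    have h1 : a ⬝ᵥ a = a ⬝ᵥ z := by
      have h := symm_dot P hP z a
      rw [hPa] at h
      exact h.trans (dotProduct_comm z a)
    rw [dotProduct_sub, h1, sub_self]
  have hb : (0:ℝ) ≤ (z - a) ⬝ᵥ (z - a) := by
    apply Finset.sum_nonneg
    intro i _
    exact mul_self_nonneg _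
  have hexpand : z ⬝ᵥ z = a ⬝ᵥ a + 2 * (a ⬝ᵥ (z - a)) + (z - a) ⬝ᵥ (z - a) := by
    have : z = a + (z - a) := by ring
    nth_rewrite 1 [this]; nth_rewrite 2 [this]
    rw [add_dotProduct, dotProduct_add, dotProduct_add, sub_dotProduct]
    rw [dotProduct_comm z a, dotProduct_sub]; ring
  rw [enorm_sq, enorm_sq]
  apply Real.sqrt_le_sqrt
  rw [hexpand, horth]
  linarith

theorem stmt_12 {m n : ℕ} (A B : Matrix (Fin m) (Fin n) ℝ)
    (hkerB : ∀ x : Fin n → ℝ, B.mulVec x = 0 → x = 0)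
    (Bplus : Matrix (Fin n) (Fin m) ℝ)
    (h1 : B * Bplus * B = B) (h2 : Bplus * B * Bplus = Bplus)
    (h3 : (B * Bplus)ᵀ = B * Bplus) (h4 : (Bplus * B)ᵀ = Bplus * B) :
    B.mulVec '' {x : Fin n → ℝ | enorm' (B.mulVec x) ≤ 1 ∧
        ∀ z : Fin n → ℝ, enorm' (B.mulVec z) ≤ 1 → enorm' (A.mulVec z) ≤ enorm' (A.mulVec x)} =
      Set.range B.mulVec ∩
        {y : Fin m → ℝ | enorm' y ≤ 1 ∧
          ∀ z : Fin m → ℝ, enorm' z ≤ 1 →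
            enorm' (A.mulVec (Bplus.mulVec z)) ≤ enorm' (A.mulVec (Bplus.mulVec y))} := by
  -- left inverse property
  have hlinv : ∀ x : Fin n → ℝ, Bplus.mulVec (B.mulVec x) = x := by
    intro x
    have hz : B.mulVec (Bplus.mulVec (B.mulVec x) - x) = 0 := by
      rw [Matrix.mulVec_sub, Matrix.mulVec_mulVec, Matrix.mulVec_mulVec, h1,
        sub_self]
    have := hkerB _ hz
    exact sub_eq_zero.mp this
  have hPP : (B * Bplus) * (B * Bplus) = B * Bplus := by
    rw [← Matrix.mul_assoc, h1]
  have hproj : ∀ z : Fin m → ℝ, enorm' ((B * Bplus).mulVec z) ≤ enorm' z :=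
    proj_norm_le _ h3 hPP
  ext y
  constructor
  · rintro ⟨x, ⟨hx1, hx2⟩, rfl⟩
    refine ⟨⟨x, rfl⟩, hx1, ?_⟩
    intro z hz
    rw [hlinv x]
    apply hx2
    rw [Matrix.mulVec_mulVec]
    exact le_trans (hproj z) hz
  · rintro ⟨⟨x₀, rfl⟩, hy1, hy2⟩
    refine ⟨x₀, ⟨hy1, ?_⟩, rfl⟩
    intro z hz
    have := hy2 (B.mulVec z) hz
    rwa [hlinv, hlinv] at this
end
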